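/- Let k be a field and R = RCFM(k). For the shift matrix A, the set (I − Aᵗ)·R equals the set of matrices R' ∈ R such that for every i ∈ ℕ, the tail sum ∑_{n ≥ i} r'_{nj} is zero for all but finitely many j ∈ ℕ. -/
import Mathlib


/-- A matrix is row-column finite if every row and every column has finitely many
nonzero entries. -/
def RCF {k : Type*} [Field k] (M : ℕ → ℕ → k) : Prop :=
  (∀ i, {j | M i j ≠ 0}.Finite) ∧ (∀ j, {i | M i j ≠ 0}.Finite)

/-- The shift matrix `A` over `k`: `a_{i+1,i} = 1` and all other entries `0`. -/
def shiftA (k : Type*) [Field k] : ℕ → ℕ → k := fun i j => if i = j + 1 then 1 else 0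

/-- The identity `ℕ×ℕ` matrix over `k`. -/
def idMat (k : Type*) [Field k] : ℕ → ℕ → k := fun i j => if i = j then 1 else 0

/-- Transpose of an `ℕ×ℕ` matrix. -/
def matTranspose {k : Type*} [Field k] (M : ℕ → ℕ → k) : ℕ → ℕ → k := fun i j => M j i

/-- Product of `ℕ×ℕ` matrices, defined entrywise by the (finite) sums. -/
noncomputable def matMul {k : Type*} [Field k] (M N : ℕ → ℕ → k) : ℕ → ℕ → k :=
  fun i j => ∑ᶠ l, M i l * N l j

lemma matMul_entry {k : Type*} [Field k] (X : ℕ → ℕ → k) (i j : ℕ) :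
    matMul (idMat k - matTranspose (shiftA k)) X i j = X i j - X (i + 1) j := by
  have hsupp : (Function.support fun l => (idMat k - matTranspose (shiftA k)) i l * X l j)
      ⊆ (({i, i + 1} : Finset ℕ) : Set ℕ) := by
    intro l hl
    simp only [Function.mem_support, Pi.sub_apply, idMat, matTranspose, shiftA] at hl
    by_contra hc
    simp only [Finset.coe_insert, Finset.coe_singleton, Set.mem_insert_iff,
      Set.mem_singleton_iff, not_or] at hc
    rw [if_neg (fun h => hc.1 h.symm), if_neg hc.2] at hl
    simp at hl
  rw [matMul, finsum_eq_finset_sum_of_support_subset _ hsupp]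
  rw [Finset.sum_insert (by simp), Finset.sum_singleton]
  simp [idMat, matTranspose, shiftA, sub_mul]; ring

lemma telescope {k : Type*} [Field k] (g : ℕ → k) (i N : ℕ) (h : i ≤ N) :
    ∑ n ∈ Finset.Ico i N, (g n - g (n + 1)) = g i - g N := by
  induction N, h using Nat.le_induction with
  | base => simp
  | succ N hN ih => rw [Finset.sum_Ico_succ_top hN, ih]; ring

lemma tail_telescope {k : Type*} [Field k] (g : ℕ → k) (hg : (Function.support g).Finite)
    (i : ℕ) : (∑ᶠ n, if i ≤ n then g n - g (n + 1) else 0) = g i := by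
  obtain ⟨b, hb⟩ := hg.bddAbove
  set N := max (b + 1) i with hN
  have hiN : i ≤ N := le_max_right _ _
  have hgz : ∀ n, N ≤ n → g n = 0 := by
    intro n hn
    by_contra hgn
    have := hb hgn
    omega
  have hsupp : (Function.support fun n => if i ≤ n then g n - g (n + 1) else 0)
      ⊆ (Finset.Ico i N : Set ℕ) := by
    intro n hn
    simp only [Function.mem_support] at hn
    simp only [Finset.coe_Ico, Set.mem_Ico]
    by_contra hc
    push_neg at hc
    rcases le_or_gt i n with h1 | h1
    · rw [if_pos h1, hgz n (hc h1), hgz (n + 1) (by have := hc h1; omega), sub_zero] at hn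
      exact hn rfl
    · rw [if_neg (by omega)] at hn; exact hn rfl
  rw [finsum_eq_finset_sum_of_support_subset _ hsupp]
  rw [Finset.sum_congr rfl (fun n hn => if_pos (Finset.mem_Ico.mp hn).1)]
  rw [telescope g i N hiN, hgz N le_rfl, sub_zero]

/-- `(I−Aᵗ)·RCFM(k)` consists exactly of the row-column-finite matrices `P` such that
for every `i`, the tail sums `∑_{n ≥ i} P n j` vanish for all but finitely many `j`. -/
theorem sub_shiftA_transpose_mul_RCFM (k : Type*) [Field k] :
    {P : ℕ → ℕ → k | ∃ X, RCF X ∧ P = matMul (idMat k - matTranspose (shiftA k)) X} =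
      {P : ℕ → ℕ → k | RCF P ∧
        ∀ i, {j | (∑ᶠ n, if i ≤ n then P n j else 0) ≠ 0}.Finite} := by
  ext P
  simp only [Set.mem_setOf_eq]
  constructor
  · rintro ⟨X, ⟨hXr, hXc⟩, rfl⟩
    have hE : ∀ i j, matMul (idMat k - matTranspose (shiftA k)) X i j = X i j - X (i + 1) j :=
      matMul_entry X
    have htail : ∀ i j, (∑ᶠ n, if i ≤ n then matMul (idMat k - matTranspose (shiftA k)) X n j
        else 0) = X i j := by
      intro i j
      calc (∑ᶠ n, if i ≤ n then matMul (idMat k - matTranspose (shiftA k)) X n j else 0)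
          = ∑ᶠ n, if i ≤ n then X n j - X (n + 1) j else 0 := by
            congr 1; funext n; rw [hE]
        _ = X i j := tail_telescope (fun n => X n j) (hXc j) i
    refine ⟨⟨fun i => ?_, fun j => ?_⟩, fun i => ?_⟩
    · apply Set.Finite.subset ((hXr i).union (hXr (i + 1)))
      intro j hj
      simp only [Set.mem_setOf_eq, hE] at hj
      simp only [Set.mem_union, Set.mem_setOf_eq]
      by_contra hc
      push_neg at hc
      rw [hc.1, hc.2, sub_zero] at hj
      exact hj rfl
    · have h2 : {i | X (i + 1) j ≠ 0}.Finite := by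
        have : {i | X (i + 1) j ≠ 0} = (fun i => i + 1) ⁻¹' {n | X n j ≠ 0} := rfl
        rw [this]
        exact Set.Finite.preimage (fun a _ b _ h => by omega) (hXc j)
      apply Set.Finite.subset ((hXc j).union h2)
      intro i hi
      simp only [Set.mem_setOf_eq, hE] at hi
      simp only [Set.mem_union, Set.mem_setOf_eq]
      by_contra hc
      push_neg at hc
      rw [hc.1, hc.2, sub_zero] at hi
      exact hi rfl
    · apply Set.Finite.subset (hXr i)
      intro j hj
      simp only [Set.mem_setOf_eq, htail] at hj
      exact hj
  · rintro ⟨⟨hPr, hPc⟩, htail⟩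
    refine ⟨fun i j => ∑ᶠ n, if i ≤ n then P n j else 0, ⟨⟨htail, fun j => ?_⟩, ?_⟩⟩
    · obtain ⟨b, hb⟩ := (hPc j).bddAbove
      apply Set.Finite.subset (Set.finite_Icc 0 b)
      intro i hi
      simp only [Set.mem_setOf_eq] at hi
      simp only [Set.mem_Icc]
      by_contra hc
      push_neg at hc
      apply hi
      rw [finsum_eq_zero_of_forall_eq_zero]
      intro n
      split_ifs with h
      · by_contra hn
        have := hb hn
        have := hc (Nat.zero_le i)
        omega
      · rfl
    · funext i j
      rw [matMul_entry]
      have hs : ∀ m, (Function.support fun n => if m ≤ n then P n j else 0).Finite := by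
        intro m
        apply Set.Finite.subset (hPc j)
        intro n hn
        simp only [Function.mem_support] at hn
        intro h
        apply hn
        split_ifs <;> simp [h]
      rw [← finsum_sub_distrib (hs i) (hs (i + 1))]
      have : ∀ n, ((if i ≤ n then P n j else 0) - (if i + 1 ≤ n then P n j else 0))
          = if n = i then P n j else 0 := by
        intro n
        rcases Nat.lt_trichotomy n i with h | h | h
        · rw [if_neg (by omega), if_neg (by omega), if_neg (by omega), sub_zero]
        · subst h; rw [if_pos le_rfl, if_neg (by omega), if_pos rfl, sub_zero]
        · rw [if_pos (by omega), if_pos (by omega), if_neg (by omega), sub_self]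
      simp only [this]
      rw [finsum_eq_single _ i (fun x hx => if_neg hx), if_pos rfl]
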